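/- Let M be a module over ℂ, let (A_n)_{n ∈ ℤ} be a family of ℂ-linear endomorphisms of M, and let r_1, …, r_N be ℂ-linear endomorphisms of M such that A_n ∘ r_i − r_i ∘ A_n = −(n+1)·A_{n-1} for all n ∈ ℤ and all i = 1, …, N. Let v ∈ M satisfy A_n(v) = 0 for all n ≥ 0. Then for every m with 1 ≤ m ≤ N+1: A_{N-m}(r_N r_{N-1} ⋯ r_1 (v)) = (-1)^{N-m+1} · (N-m+1)! · e_{m-1}(r_1, …, r_N)(A_{-1}(v)). (This is the mode computation underlying the proof of Theorem 4.4 of the paper, abstracted from the commutation relation [e^{∫Y}_{(n)}, R_i] = −(n+1) e^{∫Y}_{(n-1)} of Lemma 4.1 and the vanishing e^{∫Y}_{(n)} e^{−∫Y} = 0 for n ≥ 0.) -/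

import Mathlib

/-- The `m`-th noncommutative elementary symmetric polynomial of the list
`[X_1, …, X_n]`: the sum over `n ≥ i_1 > i_2 > … > i_m ≥ 1` of
`X_{i_1} X_{i_2} ⋯ X_{i_m}` (factors in strictly decreasing order of index),
with `e_0 = 1`. -/
def ncE {R : Type*} [Semiring R] : ℕ → List R → R
  | 0, _ => 1
  | _ + 1, [] => 0
  | m + 1, x :: xs => ncE (m + 1) xs + ncE m xs * x

lemma ncE_eq_zero {R : Type*} [Semiring R] :
    ∀ (L : List R) (m : ℕ), L.length < m → ncE m L = 0 := by
  intro L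
  induction L with
  | nil =>
    intro m hm
    match m, hm with
    | m + 1, _ => rfl
  | cons x xs ih =>
    intro m hm
    match m, hm with
    | m + 1, hm =>
      have hlen : xs.length < m := by simpa using hm
      have h1 : ncE (m + 1) xs = 0 := ih _ (by omega)
      have h2 : ncE m xs = 0 := ih _ hlen
      show ncE (m + 1) xs + ncE m xs * x = 0
      rw [h1, h2, zero_mul, add_zero]

lemma key {M : Type*} [AddCommGroup M] [Module ℂ M] (A : ℤ → Module.End ℂ M) :
    ∀ (L : List (Module.End ℂ M)),
      (∀ x ∈ L, ∀ k : ℤ, A k * x - x * A k = (-((k : ℂ) + 1)) • A (k - 1)) →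
      ∀ (v : M) (n : ℤ),
      A n ((L.reverse).prod v)
        = ∑ d ∈ Finset.range (L.length + 1),
            ((-1 : ℂ) ^ d * ∏ t ∈ Finset.range d, ((n : ℂ) + 1 - (t : ℂ))) •
              (ncE (L.length - d) L) (A (n - (d : ℤ)) v) := by
  intro L
  induction L with
  | nil => intro _ v n; simp [ncE]
  | cons x xs ih =>
    intro hL v n
    have hx : ∀ k : ℤ, A k * x - x * A k = (-((k : ℂ) + 1)) • A (k - 1) :=
      fun k => hL x List.mem_cons_self k
    have hxs : ∀ y ∈ xs, ∀ k : ℤ, A k * y - y * A k = (-((k : ℂ) + 1)) • A (k - 1) :=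
      fun y hy k => hL y (List.mem_cons_of_mem x hy) k
    have step : ∀ (k : ℤ) (w : M),
        A k (x w) = x (A k w) + (-((k : ℂ) + 1)) • A (k - 1) w := by
      intro k w
      have h := congrArg (fun f : Module.End ℂ M => f w) (hx k)
      simp only [LinearMap.sub_apply, Module.End.mul_apply, LinearMap.smul_apply] at h
      have h2 := sub_eq_iff_eq_add.mp h
      rw [h2]; abel
    have hrev : A n (((x :: xs).reverse).prod v) = A n ((xs.reverse).prod (x v)) := by
      rw [List.reverse_cons, List.prod_append, List.prod_cons, List.prod_nil, mul_one,
        Module.End.mul_apply]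
    set s := xs.length with hs
    set c : ℕ → ℂ := fun d => (-1 : ℂ) ^ d * ∏ t ∈ Finset.range d, ((n : ℂ) + 1 - (t : ℂ))
      with hc
    have hcsucc : ∀ d : ℕ, c (d + 1) = c d * (-(((n : ℂ) - (d : ℂ)) + 1)) := by
      intro d
      simp only [hc, pow_succ, Finset.prod_range_succ]
      ring
    set F : ℕ → M := fun d => c d • (ncE (s - d) xs) (x (A (n - (d : ℤ)) v)) with hF
    set G : ℕ → M := fun d => c d • (ncE (s + 1 - d) xs) (A (n - (d : ℤ)) v) with hG
    set T : ℕ → M := fun d => c d • (ncE (s + 1 - d) (x :: xs)) (A (n - (d : ℤ)) v) with hT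
    have main : A n (((x :: xs).reverse).prod v)
        = ∑ d ∈ Finset.range (s + 1), (F d + G (d + 1)) := by
      rw [hrev, ih hxs (x v) n]
      refine Finset.sum_congr rfl fun d hd => ?_
      rw [step (n - (d : ℤ)) v, map_add, map_smul, smul_add, smul_smul]
      congr 1
      rw [hG]
      simp only []
      have e1 : s + 1 - (d + 1) = s - d := by omega
      have e2 : (n : ℤ) - ((d : ℕ) + 1 : ℕ) = n - (d : ℤ) - 1 := by push_cast; ring
      rw [hcsucc d, e1, e2]
      congr 1
      push_cast; ring
    have hG0 : G 0 = 0 := by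
      have hz : ncE (s + 1 - 0) xs = 0 := ncE_eq_zero xs (s + 1) (by omega)
      simp only [hG, hz, LinearMap.zero_apply, smul_zero]
    have hlast : G (s + 1) = T (s + 1) := by
      have e1 : s + 1 - (s + 1) = 0 := by omega
      simp [hG, hT, e1, ncE]
    have hsplit : ∀ d ∈ Finset.range (s + 1), F d + G d = T d := by
      intro d hd
      have hds : d ≤ s := by have := Finset.mem_range.mp hd; omega
      have hidx : s + 1 - d = (s - d) + 1 := by omega
      have hunf : ncE ((s - d) + 1) (x :: xs) = ncE ((s - d) + 1) xs + ncE (s - d) xs * x := rfl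
      rw [hF, hG, hT]
      simp only []
      rw [hidx, hunf, LinearMap.add_apply, Module.End.mul_apply, smul_add]
      abel
    calc A n (((x :: xs).reverse).prod v)
        = ∑ d ∈ Finset.range (s + 1), (F d + G (d + 1)) := main
      _ = (∑ d ∈ Finset.range (s + 1), F d) + ∑ d ∈ Finset.range (s + 1), G (d + 1) :=
          Finset.sum_add_distrib
      _ = (∑ d ∈ Finset.range (s + 1), F d) + ∑ d ∈ Finset.range (s + 2), G d := by
          rw [Finset.sum_range_succ' G (s + 1), hG0, add_zero]
      _ = (∑ d ∈ Finset.range (s + 1), F d) + ((∑ d ∈ Finset.range (s + 1), G d) + G (s + 1)) := by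
          rw [Finset.sum_range_succ G (s + 1)]
      _ = (∑ d ∈ Finset.range (s + 1), (F d + G d)) + G (s + 1) := by
          rw [Finset.sum_add_distrib]; abel
      _ = (∑ d ∈ Finset.range (s + 1), T d) + T (s + 1) := by
          rw [Finset.sum_congr rfl hsplit, hlast]
      _ = ∑ d ∈ Finset.range (s + 2), T d := (Finset.sum_range_succ T (s + 1)).symm
      _ = ∑ d ∈ Finset.range ((x :: xs).length + 1),
            ((-1 : ℂ) ^ d * ∏ t ∈ Finset.range d, ((n : ℂ) + 1 - (t : ℂ))) •
              (ncE ((x :: xs).length - d) (x :: xs)) (A (n - (d : ℤ)) v) := rfl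

lemma prod_desc (k : ℕ) : ∏ t ∈ Finset.range k, ((k : ℂ) - (t : ℂ)) = (Nat.factorial k : ℂ) := by
  induction k with
  | zero => simp
  | succ k ih =>
    rw [Finset.prod_range_succ' (fun t => ((k + 1 : ℕ) : ℂ) - (t : ℂ)) k]
    have h1 : ∀ t ∈ Finset.range k,
        (((k + 1 : ℕ) : ℂ) - ((t + 1 : ℕ) : ℂ)) = ((k : ℂ) - (t : ℂ)) := by
      intro t _; push_cast; ring
    rw [Finset.prod_congr rfl h1, ih]
    push_cast [Nat.factorial_succ]
    ring

/-- The mode computation underlying the proof of Theorem 4.4: if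
`A_n ∘ r_i − r_i ∘ A_n = −(n+1) A_{n-1}` for all `n ∈ ℤ`, `i = 1, …, N`, and
`A_n v = 0` for `n ≥ 0`, then for `1 ≤ m ≤ N+1`,
`A_{N-m}(r_N ⋯ r_1 v) = (-1)^{N-m+1} (N-m+1)! e_{m-1}(r_1, …, r_N)(A_{-1} v)`. -/
theorem stmt7 {M : Type*} [AddCommGroup M] [Module ℂ M] (N : ℕ)
    (A : ℤ → Module.End ℂ M) (r : Fin N → Module.End ℂ M)
    (hcomm : ∀ (n : ℤ) (i : Fin N),
      A n * r i - r i * A n = (-((n : ℂ) + 1)) • A (n - 1))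
    (v : M) (hv : ∀ n : ℤ, 0 ≤ n → A n v = 0)
    (m : ℕ) (hm1 : 1 ≤ m) (hm : m ≤ N + 1) :
    A ((N : ℤ) - (m : ℤ)) (((List.ofFn r).reverse).prod v)
      = ((-1 : ℂ) ^ (N + 1 - m) * (Nat.factorial (N + 1 - m) : ℂ)) •
          (ncE (m - 1) (List.ofFn r)) (A (-1) v) := by
  have hL : ∀ x ∈ List.ofFn r, ∀ k : ℤ,
      A k * x - x * A k = (-((k : ℂ) + 1)) • A (k - 1) := by
    intro x hx k
    obtain ⟨i, rfl⟩ := List.mem_ofFn.mp hx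
    exact hcomm k i
  rw [key A (List.ofFn r) hL v ((N : ℤ) - (m : ℤ))]
  simp only [List.length_ofFn]
  rw [Finset.sum_eq_single (N + 1 - m)]
  · have e1 : N - (N + 1 - m) = m - 1 := by omega
    have e2 : (N : ℤ) - (m : ℤ) - ((N + 1 - m : ℕ) : ℤ) = -1 := by omega
    have e3 : ((((N : ℤ) - (m : ℤ)) : ℤ) : ℂ) + 1 = ((N + 1 - m : ℕ) : ℂ) := by
      push_cast [Nat.cast_sub hm]; ring
    rw [e1, e2]
    congr 1
    rw [show (∏ t ∈ Finset.range (N + 1 - m),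
        ((((N : ℤ) - (m : ℤ) : ℤ) : ℂ) + 1 - (t : ℂ)))
      = ∏ t ∈ Finset.range (N + 1 - m), (((N + 1 - m : ℕ) : ℂ) - (t : ℂ)) from
      Finset.prod_congr rfl fun t _ => by rw [e3]]
    rw [prod_desc]
  · intro b hb hne
    by_cases hcase : 0 ≤ (N : ℤ) - (m : ℤ) - (b : ℤ)
    · rw [hv _ hcase, map_zero, smul_zero]
    · have hlt : N + 1 - m < b := by omega
      have hzero : ((((N : ℤ) - (m : ℤ) : ℤ) : ℂ) + 1 - ((N + 1 - m : ℕ) : ℂ)) = 0 := by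
        push_cast [Nat.cast_sub hm]; ring
      rw [Finset.prod_eq_zero (Finset.mem_range.mpr hlt) hzero, mul_zero, zero_smul]
  · intro habs
    exact absurd (Finset.mem_range.mpr (by omega)) habs
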